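/- Let G be the group presented by ⟨a, s, t | a² = 1, [a, t⁻¹at] = 1, [s,t] = 1, s⁻¹as = a·(t⁻¹at)⟩. Then for every integer p ≥ 0, the following identity holds in G: s⁻ᵖ a sᵖ = ∏_{r=0}^{p} (t⁻ʳ a tʳ)^{ε(p,r)}, where ε(p,r) = 1 if the binomial coefficient C(p,r) is odd and ε(p,r) = 0 if C(p,r) is even, and the product is taken in order of increasing r (the factors commute). In other words, a^{sᵖ} equals the product of the conjugates a^{tʳ} over those r ∈ {0, …, p} for which the r-th entry of row p of Pascal's triangle mod 2 equals 1. -/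

import Mathlib

/-- The three generators `a`, `s`, `t`. -/
inductive Gen : Type
  | a | s | t

/-- The relators of the presentation
`⟨a, s, t | a² = 1, [a, t⁻¹at] = 1, [s,t] = 1, s⁻¹as = a·(t⁻¹at)⟩`,
where `[x,y] = x⁻¹y⁻¹xy`. -/
def rels : Set (FreeGroup Gen) :=
  { (FreeGroup.of Gen.a) ^ 2,
    (FreeGroup.of Gen.a)⁻¹ *
        ((FreeGroup.of Gen.t)⁻¹ * FreeGroup.of Gen.a * FreeGroup.of Gen.t)⁻¹ *
        FreeGroup.of Gen.a *
        ((FreeGroup.of Gen.t)⁻¹ * FreeGroup.of Gen.a * FreeGroup.of Gen.t),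
    (FreeGroup.of Gen.s)⁻¹ * (FreeGroup.of Gen.t)⁻¹ * FreeGroup.of Gen.s * FreeGroup.of Gen.t,
    ((FreeGroup.of Gen.s)⁻¹ * FreeGroup.of Gen.a * FreeGroup.of Gen.s)⁻¹ *
        (FreeGroup.of Gen.a *
          ((FreeGroup.of Gen.t)⁻¹ * FreeGroup.of Gen.a * FreeGroup.of Gen.t)) }

/-- The group `G` of the paper. -/
abbrev G := PresentedGroup rels

def a : G := PresentedGroup.of Gen.a
def s : G := PresentedGroup.of Gen.s
def t : G := PresentedGroup.of Gen.t

lemma rel_eq_one {r : FreeGroup Gen} (h : r ∈ rels) :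
    (QuotientGroup.mk r : G) = 1 :=
  (QuotientGroup.eq_one_iff r).mpr (Subgroup.subset_normalClosure h)

lemma a_sq : a * a = 1 := by
  have h := rel_eq_one (show (FreeGroup.of Gen.a) ^ 2 ∈ rels from Set.mem_insert _ _)
  have h' : a * a = (QuotientGroup.mk ((FreeGroup.of Gen.a) ^ 2) : G) := by
    rw [pow_two]; rfl
  rw [h', h]
  rfl

lemma st_comm : s * t = t * s := by
  have h := rel_eq_one (show (FreeGroup.of Gen.s)⁻¹ * (FreeGroup.of Gen.t)⁻¹ *
      FreeGroup.of Gen.s * FreeGroup.of Gen.t ∈ rels from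
    Set.mem_insert_of_mem _ (Set.mem_insert_of_mem _ (Set.mem_insert _ _)))
  have h' : s⁻¹ * t⁻¹ * s * t = 1 := h
  simpa [mul_assoc] using congrArg (fun x => t * s * x) h'

lemma conj_rel : s⁻¹ * a * s = a * (t⁻¹ * a * t) := by
  have h := rel_eq_one (show ((FreeGroup.of Gen.s)⁻¹ * FreeGroup.of Gen.a * FreeGroup.of Gen.s)⁻¹ *
      (FreeGroup.of Gen.a * ((FreeGroup.of Gen.t)⁻¹ * FreeGroup.of Gen.a * FreeGroup.of Gen.t)) ∈
      rels from
    Set.mem_insert_of_mem _ (Set.mem_insert_of_mem _ (Set.mem_insert_of_mem _ rfl)))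
  have h' : (s⁻¹ * a * s)⁻¹ * (a * (t⁻¹ * a * t)) = 1 := h
  exact inv_mul_eq_one.mp h'

/-- The conjugate `t⁻ʳ a tʳ`. -/
def aa (r : ℕ) : G := (t ^ r)⁻¹ * a * t ^ r

lemma aa_eq (r : ℕ) : (t ^ r)⁻¹ * a * t ^ r = aa r := rfl

lemma aa_sq (r : ℕ) : aa r * aa r = 1 := by
  have h : aa r * aa r = (t ^ r)⁻¹ * (a * a) * t ^ r := by unfold aa; group
  rw [h, a_sq]; group

lemma aa_pow_mod (r m : ℕ) : aa r ^ m = aa r ^ (m % 2) := by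
  conv_lhs => rw [← Nat.div_add_mod m 2]
  rw [pow_add, pow_mul, pow_two, aa_sq, one_pow, one_mul]

lemma aa_mul_pow (r m n : ℕ) :
    aa r ^ (m % 2) * aa r ^ (n % 2) = aa r ^ ((m + n) % 2) := by
  rw [← pow_add, aa_pow_mod, ← Nat.add_mod]

lemma key (r : ℕ) : s⁻¹ * aa r * s = aa r * aa (r + 1) := by
  have c : Commute s t := st_comm
  have cr : s * t ^ r = t ^ r * s := c.pow_right r
  have c1 : s⁻¹ * (t ^ r)⁻¹ = (t ^ r)⁻¹ * s⁻¹ := by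
    rw [← mul_inv_rev, ← mul_inv_rev, cr]
  unfold aa
  calc s⁻¹ * ((t ^ r)⁻¹ * a * t ^ r) * s
      = (s⁻¹ * (t ^ r)⁻¹) * a * (t ^ r * s) := by group
    _ = ((t ^ r)⁻¹ * s⁻¹) * a * (s * t ^ r) := by rw [c1, ← cr]
    _ = (t ^ r)⁻¹ * (s⁻¹ * a * s) * t ^ r := by group
    _ = (t ^ r)⁻¹ * (a * (t⁻¹ * a * t)) * t ^ r := by rw [conj_rel]
    _ = (t ^ r)⁻¹ * a * t ^ r * ((t ^ (r + 1))⁻¹ * a * t ^ (r + 1)) := by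
        rw [pow_succ]; group

lemma key_pow (r m : ℕ) :
    s⁻¹ * aa r ^ (m % 2) * s = aa r ^ (m % 2) * aa (r + 1) ^ (m % 2) := by
  rcases Nat.mod_two_eq_zero_or_one m with h | h <;> rw [h]
  · simp
  · simpa using key r

lemma conj_prod (g : G) (l : List G) :
    g⁻¹ * l.prod * g = (l.map (fun x => g⁻¹ * x * g)).prod := by
  induction l with
  | nil => simp
  | cons x xs ih =>
    simp only [List.prod_cons, List.map_cons, ← ih]
    group

lemma telescope : ∀ (n k : ℕ) (h : ℕ → ℕ),
    ((List.range (n + 1)).map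
      (fun i => aa (k + i) ^ (h i % 2) * aa (k + i + 1) ^ (h i % 2))).prod
    = aa k ^ (h 0 % 2) *
      ((List.range n).map (fun i => aa (k + i + 1) ^ ((h i + h (i + 1)) % 2))).prod *
      aa (k + n + 1) ^ (h n % 2) := by
  intro n
  induction n with
  | zero => intro k h; simp [List.range_succ, mul_assoc]
  | succ n ih =>
    intro k h
    rw [List.range_succ_eq_map, List.map_cons, List.prod_cons, List.map_map]
    have e1 : ((fun i => aa (k + i) ^ (h i % 2) * aa (k + i + 1) ^ (h i % 2)) ∘ Nat.succ)
        = (fun i => aa ((k + 1) + i) ^ ((h ∘ Nat.succ) i % 2) *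
            aa ((k + 1) + i + 1) ^ ((h ∘ Nat.succ) i % 2)) := by
      funext i
      simp only [Function.comp]
      rw [show k + (i + 1) = k + 1 + i by omega, show k + 1 + i + 1 = k + (i + 1) + 1 by omega,
        show k + (i + 1) + 1 = k + 1 + i + 1 by omega]
    rw [e1, ih (k + 1) (h ∘ Nat.succ)]
    rw [List.range_succ_eq_map, List.map_cons, List.prod_cons, List.map_map]
    simp only [Function.comp, Nat.succ_eq_add_one, add_zero, Nat.add_zero]
    have e2 : ((fun i => aa (k + i + 1) ^ ((h i + h (i + 1)) % 2)) ∘ Nat.succ)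
        = (fun i => aa (k + 1 + i + 1) ^ ((h (i + 1) + h (i + 1 + 1)) % 2)) := by
      funext i
      simp only [Function.comp, Nat.succ_eq_add_one]
      rw [show k + (i + 1) + 1 = k + 1 + i + 1 by omega]
    rw [e2, show k + (n + 1) + 1 = k + 1 + n + 1 by omega]
    set M := (List.map (fun i => aa (k + 1 + i + 1) ^ ((h (i + 1) + h (i + 1 + 1)) % 2))
      (List.range n)).prod with hM
    calc aa k ^ (h 0 % 2) * aa (k + 1) ^ (h 0 % 2) *
          (aa (k + 1) ^ (h (0 + 1) % 2) * M * aa (k + 1 + n + 1) ^ (h (n + 1) % 2))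
        = aa k ^ (h 0 % 2) * (aa (k + 1) ^ (h 0 % 2) * aa (k + 1) ^ (h (0 + 1) % 2)) * M *
            aa (k + 1 + n + 1) ^ (h (n + 1) % 2) := by
          simp only [mul_assoc]
      _ = aa k ^ (h 0 % 2) * aa (k + 1) ^ ((h 0 + h (0 + 1)) % 2) * M *
            aa (k + 1 + n + 1) ^ (h (n + 1) % 2) := by rw [aa_mul_pow]
      _ = aa k ^ (h 0 % 2) * (aa (k + 1) ^ ((h 0 + h (0 + 1)) % 2) * M) *
            aa (k + 1 + n + 1) ^ (h (n + 1) % 2) := by simp only [mul_assoc]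

/-- In `G`, for every `p ≥ 0` the conjugate `a^{sᵖ} = s⁻ᵖ a sᵖ` equals the ordered
product, over `r = 0, …, p`, of `(t⁻ʳ a tʳ)^{ε(p,r)}`, where `ε(p,r) = C(p,r) mod 2`
(i.e. `ε(p,r) = 1` exactly when the binomial coefficient `C(p,r)` is odd). -/
theorem conj_a_s_pow_eq_pascal_product (p : ℕ) :
    (s ^ p)⁻¹ * a * s ^ p =
      (((List.range (p + 1)).map
        (fun r => ((t ^ r)⁻¹ * a * t ^ r) ^ (Nat.choose p r % 2))).prod) := by
  simp only [aa_eq]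
  induction p with
  | zero => simp [aa, List.range_succ]
  | succ p ih =>
    have lhs : (s ^ (p + 1))⁻¹ * a * s ^ (p + 1)
        = s⁻¹ * ((s ^ p)⁻¹ * a * s ^ p) * s := by
      rw [pow_succ]; group
    rw [lhs, ih, conj_prod, List.map_map]
    have e1 : ((fun x => s⁻¹ * x * s) ∘ fun r => aa r ^ (p.choose r % 2))
        = (fun r => aa (0 + r) ^ (p.choose r % 2) * aa (0 + r + 1) ^ (p.choose r % 2)) := by
      funext r
      simp only [Function.comp, Nat.zero_add]
      exact key_pow r (p.choose r)
    rw [e1, telescope p 0 (fun r => p.choose r)]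
    -- now rewrite the RHS
    rw [List.range_succ, List.map_append, List.prod_append,
      List.range_succ_eq_map, List.map_cons, List.prod_cons, List.map_map]
    simp only [Function.comp, List.map_singleton, List.prod_singleton,
      Nat.choose_zero_right, Nat.choose_self, Nat.zero_add]
    have e4 : (fun i => aa (i + 1) ^ ((p.choose i + p.choose (i + 1)) % 2))
        = ((fun r => aa r ^ ((p + 1).choose r % 2)) ∘ Nat.succ) := by
      funext i
      simp only [Function.comp, Nat.succ_eq_add_one, Nat.choose_succ_succ]
    rw [e4]
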